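/- Let H = H(n,r,q|σ) with δ(σ) ≥ r - β + 1 and 2 ≤ s(σ) ≤ β. Then the (2,β)-spectrum of H has no gaps above n: if H admits a k-(2,β)-colouring for some k > n+1, then H admits a k'-(2,β)-colouring for every k' with n+1 ≤ k' ≤ k. -/

import Mathlib

set_option maxHeartbeats 1000000


open Finset

/-- `K` is an edge of the σ-hypergraph `H(n,r,q | σ)`: the multiset of non-zero
cardinalities of the intersections of `K` with the `n` classes equals `σ`. -/
def sigmaEdge (n q : ℕ) (σ : Multiset ℕ) (K : Finset (Fin n × Fin q)) : Prop :=
  (((Finset.univ : Finset (Fin n)).val.map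
      fun i => (K.filter fun v => v.1 = i).card).filter fun m => m ≠ 0) = σ

/-- `c` is an `(α,β)`-colouring: every edge contains at least `α` and at most `β` colours. -/
def isABColouring (n q : ℕ) (σ : Multiset ℕ) (α β : ℕ) (c : Fin n × Fin q → ℕ) : Prop :=
  ∀ K : Finset (Fin n × Fin q), sigmaEdge n q σ K →
    α ≤ (K.image c).card ∧ (K.image c).card ≤ β

/-- `c` uses exactly `k` colours. -/
def usesExactly (n q k : ℕ) (c : Fin n × Fin q → ℕ) : Prop :=
  ((Finset.univ : Finset (Fin n × Fin q)).image c).card = k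

/-- every class of the σ-hypergraph is monochromatic under `c`. -/
def classesMonochromatic (n q : ℕ) (c : Fin n × Fin q → ℕ) : Prop :=
  ∀ v w : Fin n × Fin q, v.1 = w.1 → c v = c w

/-- `σ` is a partition of `r` (a multiset of positive integers summing to `r`). -/
def IsPartitionOf (σ : Multiset ℕ) (r : ℕ) : Prop := σ.sum = r ∧ 0 ∉ σ

namespace Stmt14Aux

/-- colours of class `i` (indexed by `ℕ`). -/
def classA (n q : ℕ) (c : Fin n × Fin q → ℕ) (i : ℕ) : Finset ℕ :=
  ((Finset.univ : Finset (Fin n × Fin q)).filter (fun v => v.1.val = i)).image c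

/-- colours of class `i` not appearing in earlier classes. -/
def newC (n q : ℕ) (c : Fin n × Fin q → ℕ) (i : ℕ) : Finset ℕ :=
  classA n q c i \ (Finset.range i).biUnion (classA n q c)

def uC (n q : ℕ) (c : Fin n × Fin q → ℕ) (i : ℕ) : ℕ := (newC n q c i).card

lemma classA_card_le (n q : ℕ) (c : Fin n × Fin q → ℕ) (i : ℕ) :
    (classA n q c i).card ≤ q := by
  refine le_trans Finset.card_image_le ?_
  have : ((Finset.univ : Finset (Fin n × Fin q)).filter (fun v => v.1.val = i)).card
      ≤ (Finset.univ : Finset (Fin q)).card := by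
    refine Finset.card_le_card_of_injOn (fun v => v.2) (fun v _ => Finset.mem_univ _) ?_
    intro v hv w hw h
    simp only [Finset.mem_coe, Finset.mem_filter] at hv hw
    have h1 : v.1 = w.1 := Fin.ext (by rw [hv.2, hw.2])
    exact Prod.ext h1 h
  simpa using this

lemma uC_le (n q : ℕ) (c : Fin n × Fin q → ℕ) (i : ℕ) : uC n q c i ≤ q :=
  le_trans (Finset.card_le_card (Finset.sdiff_subset)) (classA_card_le n q c i)

lemma newC_disjoint (n q : ℕ) (c : Fin n × Fin q → ℕ) {a b : ℕ} (hab : a < b) :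
    Disjoint (newC n q c a) (newC n q c b) := by
  rw [Finset.disjoint_left]
  intro x hxa hxb
  have h1 : x ∈ classA n q c a := (Finset.mem_sdiff.mp hxa).1
  have h2 := (Finset.mem_sdiff.mp hxb).2
  exact h2 (Finset.mem_biUnion.mpr ⟨a, Finset.mem_range.mpr hab, h1⟩)

lemma sum_card_new (A : ℕ → Finset ℕ) (m : ℕ) :
    ∑ i ∈ Finset.range m, (A i \ (Finset.range i).biUnion A).card
      = ((Finset.range m).biUnion A).card := by
  induction m with
  | zero => simp
  | succ m ih =>
    rw [Finset.sum_range_succ, ih, Finset.range_add_one, Finset.biUnion_insert,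
      ← Finset.card_sdiff_add_card]
    omega

lemma total_eq_sum_uC (n q : ℕ) (c : Fin n × Fin q → ℕ) :
    ((Finset.univ : Finset (Fin n × Fin q)).image c).card
      = ∑ i ∈ Finset.range n, uC n q c i := by
  unfold uC newC
  rw [sum_card_new]
  congr 1
  ext x
  simp only [Finset.mem_image, Finset.mem_biUnion, Finset.mem_range, classA,
    Finset.mem_filter, Finset.mem_univ, true_and]
  constructor
  · rintro ⟨v, -, rfl⟩
    exact ⟨v.1.val, v.1.isLt, v, rfl, rfl⟩
  · rintro ⟨i, -, v, -, rfl⟩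
    exact ⟨v, rfl⟩

lemma exists_t (w : ℕ → ℕ) (m : ℕ) (hw : ∀ i < m, 1 ≤ w i) :
    ∀ d k', m ≤ k' → k' + d = ∑ i ∈ Finset.range m, w i →
    ∃ t : ℕ → ℕ, (∀ i < m, 1 ≤ t i ∧ t i ≤ w i) ∧ ∑ i ∈ Finset.range m, t i = k' := by
  intro d
  induction d with
  | zero =>
    intro k' h1 h2
    exact ⟨w, fun i hi => ⟨hw i hi, le_rfl⟩, by omega⟩
  | succ d ih =>
    intro k' h1 h2
    obtain ⟨t, ht, hsum⟩ := ih (k' + 1) (by omega) (by omega)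
    have hlt : ∑ i ∈ Finset.range m, (1 : ℕ) < ∑ i ∈ Finset.range m, t i := by
      simp only [Finset.sum_const, Finset.card_range, smul_eq_mul, mul_one]
      omega
    obtain ⟨i, hi, hti⟩ := Finset.exists_lt_of_sum_lt hlt
    refine ⟨fun j => if j = i then t i - 1 else t j, ?_, ?_⟩
    · intro j hj
      have hb := ht j hj
      show 1 ≤ (if j = i then t i - 1 else t j) ∧ (if j = i then t i - 1 else t j) ≤ w j
      split_ifs with h
      · subst h
        exact ⟨by omega, by omega⟩
      · exact hb
    · have e1 : (if i = i then t i - 1 else t i) + ∑ x ∈ (Finset.range m).erase i,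
          (if x = i then t i - 1 else t x) = ∑ x ∈ Finset.range m,
          (if x = i then t i - 1 else t x) := Finset.add_sum_erase _ (fun x => if x = i then t i - 1 else t x) hi
      have e2 : t i + ∑ x ∈ (Finset.range m).erase i, t x
          = ∑ x ∈ Finset.range m, t x := Finset.add_sum_erase _ _ hi
      have e3 : ∑ x ∈ (Finset.range m).erase i, (if x = i then t i - 1 else t x)
          = ∑ x ∈ (Finset.range m).erase i, t x := by
        refine Finset.sum_congr rfl (fun x hx => ?_)
        rw [if_neg (Finset.ne_of_mem_erase hx)]
      simp only [eq_self_iff_true, if_true] at e1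
      show ∑ x ∈ Finset.range m, (if x = i then t i - 1 else t x) = k'
      omega

lemma exists_seg (t : ℕ → ℕ) :
    ∀ m x, x < ∑ i ∈ Finset.range m, t i →
    ∃ i < m, ∑ j ∈ Finset.range i, t j ≤ x ∧ x < ∑ j ∈ Finset.range i, t j + t i := by
  intro m
  induction m with
  | zero => simp
  | succ m ih =>
    intro x hx
    by_cases h : x < ∑ i ∈ Finset.range m, t i
    · obtain ⟨i, h1, h2⟩ := ih x h
      exact ⟨i, by omega, h2⟩
    · rw [Finset.sum_range_succ] at hx
      exact ⟨m, by omega, by omega, by omega⟩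

/-- the constructed colouring: class `i` gets an interval of `t i` fresh colours. -/
def col (n q : ℕ) (t : ℕ → ℕ) : Fin n × Fin q → ℕ :=
  fun v => (∑ j ∈ Finset.range v.1.val, t j) + min v.2.val (t v.1.val - 1)

lemma col_mem_Ico (n q : ℕ) (t : ℕ → ℕ) (ht : ∀ i < n, 1 ≤ t i) (v : Fin n × Fin q) :
    col n q t v ∈ Finset.Ico (∑ j ∈ Finset.range v.1.val, t j)
      (∑ j ∈ Finset.range v.1.val, t j + t v.1.val) := by
  have h1 := ht v.1.val v.1.isLt
  have h2 : min v.2.val (t v.1.val - 1) ≤ t v.1.val - 1 := min_le_right _ _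
  simp only [col, Finset.mem_Ico]
  omega

lemma off_add_le (t : ℕ → ℕ) {a b : ℕ} (hab : a < b) :
    ∑ j ∈ Finset.range a, t j + t a ≤ ∑ j ∈ Finset.range b, t j := by
  rw [← Finset.sum_range_succ]
  exact Finset.sum_le_sum_of_subset (Finset.range_subset_range.mpr hab)

lemma col_uses (n q : ℕ) (hq : 0 < q) (t : ℕ → ℕ) (ht : ∀ i < n, 1 ≤ t i ∧ t i ≤ q) :
    ((Finset.univ : Finset (Fin n × Fin q)).image (col n q t)).card
      = ∑ i ∈ Finset.range n, t i := by
  have himg : (Finset.univ : Finset (Fin n × Fin q)).image (col n q t)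
      = Finset.range (∑ i ∈ Finset.range n, t i) := by
    ext x
    simp only [Finset.mem_image, Finset.mem_range, Finset.mem_univ, true_and]
    constructor
    · rintro ⟨v, rfl⟩
      have hm := Finset.mem_Ico.mp (col_mem_Ico n q t (fun i hi => (ht i hi).1) v)
      have h3 : ∑ j ∈ Finset.range v.1.val, t j + t v.1.val ≤ ∑ i ∈ Finset.range n, t i := by
        rw [← Finset.sum_range_succ]
        exact Finset.sum_le_sum_of_subset (Finset.range_subset_range.mpr v.1.isLt)
      omega
    · intro hx
      obtain ⟨i, hi, h1, h2⟩ := exists_seg t n x hx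
      have hti := ht i hi
      refine ⟨(⟨i, hi⟩, ⟨x - ∑ j ∈ Finset.range i, t j, by omega⟩), ?_⟩
      show (∑ j ∈ Finset.range i, t j) + min (x - ∑ j ∈ Finset.range i, t j) (t i - 1) = x
      rw [Nat.min_eq_left (by omega)]
      omega
  rw [himg, Finset.card_range]


lemma class_card (n q : ℕ) (i : Fin n) :
    ((Finset.univ : Finset (Fin n × Fin q)).filter (fun v => v.1 = i)).card = q := by
  have h : (Finset.univ : Finset (Fin n × Fin q)).filter (fun v => v.1 = i)
      = ({i} : Finset (Fin n)) ×ˢ (Finset.univ : Finset (Fin q)) := by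
    ext v
    simp only [Finset.mem_filter, Finset.mem_univ, true_and, Finset.mem_product,
      Finset.mem_singleton, and_true]
  rw [h, Finset.card_product]
  simp

lemma col_valid (n r q β δ : ℕ) (σ : Multiset ℕ) (c : Fin n × Fin q → ℕ)
    (hpart : IsPartitionOf σ r)
    (hδmem : δ ∈ σ) (hδmin : ∀ x ∈ σ, δ ≤ x)
    (hδ : r - β + 1 ≤ δ) (hs2 : 2 ≤ σ.card)
    (hc : isABColouring n q σ 2 β c)
    (t : ℕ → ℕ) (ht : ∀ i < n, 1 ≤ t i ∧ t i ≤ max (uC n q c i) 1) :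
    isABColouring n q σ 2 β (col n q t) := by
  intro K hK
  set P : Fin n → ℕ := fun i => (K.filter fun v => v.1 = i).card with hPdef
  set C : Finset (Fin n) := Finset.univ.filter (fun i => P i ≠ 0) with hCdef
  -- the multiset of non-zero parts is σ
  have hσ : σ = C.val.map P := by
    rw [← hK]
    rw [show ((Finset.univ : Finset (Fin n)).val.map
        fun i => (K.filter fun v => v.1 = i).card) = Finset.univ.val.map P from rfl]
    rw [Multiset.filter_map]
    rfl
  have hsumC : ∑ i ∈ C, P i = r := by
    have : σ.sum = ∑ i ∈ C, P i := by rw [hσ]; rfl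
    rw [← this, hpart.1]
  have hmemσ : ∀ i ∈ C, P i ∈ σ := by
    intro i hi
    rw [hσ]
    exact Multiset.mem_map_of_mem _ hi
  have hcardC : C.card = Multiset.card σ := by
    rw [hσ, Multiset.card_map]
    rfl
  have hPpos : ∀ i ∈ C, 1 ≤ P i := by
    intro i hi
    have := (Finset.mem_filter.mp hi).2
    omega
  have hPδ : ∀ i ∈ C, δ ≤ P i := fun i hi => hδmin _ (hmemσ i hi)
  have hδ1 : 1 ≤ δ := by
    rcases Nat.eq_zero_or_pos δ with h | h
    · exact absurd (h ▸ hδmem) hpart.2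
    · exact h
  have hPr : ∀ i ∈ C, P i ≤ r := by
    intro i hi
    rw [← hsumC]
    exact Finset.single_le_sum (fun j _ => Nat.zero_le _) hi
  have hPq : ∀ i : Fin n, P i ≤ q := by
    intro i
    rw [← class_card n q i]
    exact Finset.card_le_card (Finset.filter_subset_filter _ (Finset.subset_univ K))
  -- split K along its classes
  have hKsplit : K = C.biUnion (fun i => K.filter (fun v => v.1 = i)) := by
    ext v
    simp only [Finset.mem_biUnion, Finset.mem_filter, hCdef, Finset.mem_univ, true_and]
    constructor
    · intro hv
      refine ⟨v.1, ?_, hv, rfl⟩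
      have : v ∈ K.filter (fun w => w.1 = v.1) := Finset.mem_filter.mpr ⟨hv, rfl⟩
      have hne : (K.filter (fun w => w.1 = v.1)).Nonempty := ⟨v, this⟩
      simpa [hPdef] using Finset.card_ne_zero_of_mem this
    · rintro ⟨i, -, hv, -⟩
      exact hv
  have himg : K.image (col n q t)
      = C.biUnion (fun i => (K.filter (fun v => v.1 = i)).image (col n q t)) := by
    conv_lhs => rw [hKsplit]
    exact Finset.biUnion_image
  have hbound : ∀ (i : Fin n) (x : ℕ), x ∈ (K.filter (fun v => v.1 = i)).image (col n q t) →
      x ∈ Finset.Ico (∑ j ∈ Finset.range i.val, t j)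
        (∑ j ∈ Finset.range i.val, t j + t i.val) := by
    rintro i x hx
    obtain ⟨v, hv, rfl⟩ := Finset.mem_image.mp hx
    have hv1 : v.1 = i := (Finset.mem_filter.mp hv).2
    have := col_mem_Ico n q t (fun j hj => (ht j hj).1) v
    rwa [hv1] at this
  have hdisj : ∀ i ∈ C, ∀ j ∈ C, i ≠ j →
      Disjoint ((K.filter (fun v => v.1 = i)).image (col n q t))
        ((K.filter (fun v => v.1 = j)).image (col n q t)) := by
    have key : ∀ i j : Fin n, i.val < j.val →
        Disjoint ((K.filter (fun v => v.1 = i)).image (col n q t))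
          ((K.filter (fun v => v.1 = j)).image (col n q t)) := by
      intro i j hij
      rw [Finset.disjoint_left]
      intro x hxi hxj
      have h1 := Finset.mem_Ico.mp (hbound i x hxi)
      have h2 := Finset.mem_Ico.mp (hbound j x hxj)
      have h3 := off_add_le t hij
      omega
    intro i _ j _ hij
    rcases Nat.lt_or_ge i.val j.val with h | h
    · exact key i j h
    · have : j.val < i.val := by
        rcases Nat.lt_or_ge j.val i.val with h' | h'
        · exact h'
        · exact absurd (Fin.ext (by omega : i.val = j.val)) hij
      exact (key j i this).symm
  have hcarddecomp : (K.image (col n q t)).card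
      = ∑ i ∈ C, ((K.filter (fun v => v.1 = i)).image (col n q t)).card := by
    rw [himg, Finset.card_biUnion hdisj]
  -- lower bound
  have hlow2 : 2 ≤ (K.image (col n q t)).card := by
    rw [hcarddecomp]
    calc 2 ≤ σ.card := hs2
    _ = C.card := hcardC.symm
    _ = ∑ i ∈ C, 1 := by rw [Finset.sum_const, smul_eq_mul, mul_one]
    _ ≤ _ := by
        refine Finset.sum_le_sum (fun i hi => ?_)
        have hne : (K.filter (fun v => v.1 = i)).Nonempty :=
          Finset.card_pos.mp (lt_of_lt_of_le Nat.zero_lt_one (hPpos i hi))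
        exact Finset.card_pos.mpr (hne.image _)
  refine ⟨hlow2, ?_⟩
  -- upper bounds on each class contribution
  have hei_t : ∀ i : Fin n, ((K.filter (fun v => v.1 = i)).image (col n q t)).card ≤ t i.val := by
    intro i
    have hsub : (K.filter (fun v => v.1 = i)).image (col n q t)
        ⊆ Finset.Ico (∑ j ∈ Finset.range i.val, t j)
          (∑ j ∈ Finset.range i.val, t j + t i.val) := fun x hx => hbound i x hx
    calc _ ≤ (Finset.Ico (∑ j ∈ Finset.range i.val, t j)
          (∑ j ∈ Finset.range i.val, t j + t i.val)).card := Finset.card_le_card hsub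
    _ = t i.val := by rw [Nat.card_Ico]; omega
  have hei_P : ∀ i : Fin n, ((K.filter (fun v => v.1 = i)).image (col n q t)).card ≤ P i :=
    fun i => Finset.card_image_le
  rw [hcarddecomp]
  by_cases hcase : ∀ i ∈ C, 1 ≤ uC n q c i.val
  · -- all classes of K contribute new colours in c : build a comparison edge
    have hall : ∀ i ∈ C, t i.val ≤ uC n q c i.val := by
      intro i hi
      have h1 := (ht i.val i.isLt).2
      have h2 := hcase i hi
      omega
    have hVex : ∀ i ∈ C, ∃ V : Finset (Fin n × Fin q),
        (∀ v ∈ V, v.1 = i) ∧ V.card = P i ∧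
        min (uC n q c i.val) (P i) ≤ ((V.image c) ∩ newC n q c i.val).card := by
      intro i hi
      obtain ⟨T, hTN, hTcard⟩ := Finset.exists_subset_card_eq (s := newC n q c i.val)
        (n := min (uC n q c i.val) (P i)) (min_le_left _ _)
      have hTA : ∀ x ∈ T, x ∈ classA n q c i.val := fun x hx =>
        (Finset.mem_sdiff.mp (hTN hx)).1
      have hpick : ∀ x : {x // x ∈ T}, ∃ v : Fin n × Fin q,
          (v ∈ Finset.univ.filter (fun w : Fin n × Fin q => w.1.val = i.val) ∧ c v = x.1) := by
        intro x
        obtain ⟨v, hv1, hv2⟩ := Finset.mem_image.mp (hTA x.1 x.2)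
        exact ⟨v, hv1, hv2⟩
      choose g hg1 hg2 using hpick
      set W : Finset (Fin n × Fin q) := T.attach.image g with hWdef
      have hWsub : W ⊆ Finset.univ.filter (fun v : Fin n × Fin q => v.1 = i) := by
        intro v hv
        obtain ⟨x, -, rfl⟩ := Finset.mem_image.mp hv
        have := (Finset.mem_filter.mp (hg1 x)).2
        exact Finset.mem_filter.mpr ⟨Finset.mem_univ _, Fin.ext this⟩
      have hWcard : W.card ≤ P i := by
        calc W.card ≤ T.attach.card := Finset.card_image_le
        _ = T.card := Finset.card_attach
        _ ≤ P i := by rw [hTcard]; exact min_le_right _ _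
      obtain ⟨V, hWV, hVsub, hVcard⟩ := Finset.exists_subsuperset_card_eq hWsub hWcard
        (by rw [class_card n q i]; exact hPq i)
      refine ⟨V, fun v hv => (Finset.mem_filter.mp (hVsub hv)).2, hVcard, ?_⟩
      have hTsub : T ⊆ (V.image c) ∩ newC n q c i.val := by
        intro x hx
        refine Finset.mem_inter.mpr ⟨?_, hTN hx⟩
        exact Finset.mem_image.mpr ⟨g ⟨x, hx⟩,
          hWV (Finset.mem_image_of_mem g (Finset.mem_attach _ ⟨x, hx⟩)), hg2 ⟨x, hx⟩⟩
      calc min (uC n q c i.val) (P i) = T.card := hTcard.symm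
      _ ≤ _ := Finset.card_le_card hTsub
    choose! V hV1 hV2 hV3 using hVex
    set K' : Finset (Fin n × Fin q) := C.biUnion V with hK'def
    have hK'filter : ∀ i : Fin n, (K'.filter fun v => v.1 = i).card = P i := by
      intro i
      by_cases h : i ∈ C
      · have : K'.filter (fun v => v.1 = i) = V i := by
          ext v
          simp only [Finset.mem_filter, hK'def, Finset.mem_biUnion]
          constructor
          · rintro ⟨⟨j, hj, hvj⟩, hv1⟩
            have : j = i := by rw [← hV1 j hj v hvj, hv1]
            exact this ▸ hvj
          · intro hv
            exact ⟨⟨i, h, hv⟩, hV1 i h v hv⟩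
        rw [this, hV2 i h]
      · have h0 : P i = 0 := by
          by_contra h'
          exact h (Finset.mem_filter.mpr ⟨Finset.mem_univ _, h'⟩)
        have : K'.filter (fun v => v.1 = i) = ∅ := by
          ext v
          simp only [Finset.mem_filter, hK'def, Finset.mem_biUnion, Finset.notMem_empty,
            iff_false, not_and]
          rintro ⟨j, hj, hvj⟩ hv1
          exact h (hv1 ▸ (hV1 j hj v hvj) ▸ hj)
        rw [this, Finset.card_empty, h0]
    have hK'edge : sigmaEdge n q σ K' := by
      unfold sigmaEdge
      rw [Multiset.map_congr rfl (fun i _ => hK'filter i)]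
      exact hK
    have hβ' := (hc K' hK'edge).2
    have hnewsub : C.biUnion (fun i => (V i).image c ∩ newC n q c i.val) ⊆ K'.image c := by
      intro x hx
      obtain ⟨i, hi, hxi⟩ := Finset.mem_biUnion.mp hx
      have : x ∈ (V i).image c := (Finset.mem_inter.mp hxi).1
      exact Finset.image_subset_image (Finset.subset_biUnion_of_mem V hi) this
    have hNdisj : ∀ i ∈ C, ∀ j ∈ C, i ≠ j →
        Disjoint ((V i).image c ∩ newC n q c i.val) ((V j).image c ∩ newC n q c j.val) := by
      intro i _ j _ hij
      have key : ∀ a b : Fin n, a.val < b.val →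
          Disjoint ((V a).image c ∩ newC n q c a.val) ((V b).image c ∩ newC n q c b.val) := by
        intro a b hab
        exact Finset.disjoint_of_subset_left Finset.inter_subset_right
          (Finset.disjoint_of_subset_right Finset.inter_subset_right
            (newC_disjoint n q c hab))
      rcases Nat.lt_or_ge i.val j.val with h | h
      · exact key i j h
      · have : j.val < i.val := by
          rcases Nat.lt_or_ge j.val i.val with h' | h'
          · exact h'
          · exact absurd (Fin.ext (by omega : i.val = j.val)) hij
        exact (key j i this).symm
    have hlowsum : ∑ i ∈ C, min (uC n q c i.val) (P i) ≤ (K'.image c).card := by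
      calc ∑ i ∈ C, min (uC n q c i.val) (P i)
          ≤ ∑ i ∈ C, ((V i).image c ∩ newC n q c i.val).card :=
            Finset.sum_le_sum (fun i hi => hV3 i hi)
      _ = (C.biUnion (fun i => (V i).image c ∩ newC n q c i.val)).card :=
            (Finset.card_biUnion hNdisj).symm
      _ ≤ (K'.image c).card := Finset.card_le_card hnewsub
    calc ∑ i ∈ C, ((K.filter (fun v => v.1 = i)).image (col n q t)).card
        ≤ ∑ i ∈ C, min (uC n q c i.val) (P i) := by
          refine Finset.sum_le_sum (fun i hi => ?_)
          exact le_min (le_trans (hei_t i) (hall i hi)) (hei_P i)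
    _ ≤ (K'.image c).card := hlowsum
    _ ≤ β := hβ'
  · -- some class of K contributes no new colour : pure arithmetic
    push_neg at hcase
    obtain ⟨i₀, hi₀, hu0⟩ := hcase
    have hu0' : uC n q c i₀.val = 0 := by omega
    have ht0 : t i₀.val = 1 := by
      have := ht i₀.val i₀.isLt
      rw [hu0'] at this
      omega
    have e1 : ((K.filter (fun v => v.1 = i₀)).image (col n q t)).card
        + ∑ i ∈ C.erase i₀, ((K.filter (fun v => v.1 = i)).image (col n q t)).card
        = ∑ i ∈ C, ((K.filter (fun v => v.1 = i)).image (col n q t)).card :=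
      Finset.add_sum_erase _ (fun i => ((K.filter (fun v => v.1 = i)).image (col n q t)).card) hi₀
    have e2 : P i₀ + ∑ i ∈ C.erase i₀, P i = ∑ i ∈ C, P i := Finset.add_sum_erase _ P hi₀
    have e3 : ∑ i ∈ C.erase i₀, ((K.filter (fun v => v.1 = i)).image (col n q t)).card
        ≤ ∑ i ∈ C.erase i₀, P i := Finset.sum_le_sum (fun i _ => hei_P i)
    have e4 : ((K.filter (fun v => v.1 = i₀)).image (col n q t)).card ≤ 1 := by
      have := hei_t i₀
      omega
    have e5 := hPδ i₀ hi₀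
    have e6 := hPr i₀ hi₀
    omega

end Stmt14Aux

theorem stmt14 (n r q β δ : ℕ) (σ : Multiset ℕ)
    (hpart : IsPartitionOf σ r)
    (hδmem : δ ∈ σ) (hδmin : ∀ x ∈ σ, δ ≤ x)
    (hδ : r - β + 1 ≤ δ) (hs2 : 2 ≤ σ.card) (hsβ : σ.card ≤ β)
    (k : ℕ) (hk : n + 1 < k)
    (hcol : ∃ c : Fin n × Fin q → ℕ, isABColouring n q σ 2 β c ∧ usesExactly n q k c) :
    ∀ k' : ℕ, n + 1 ≤ k' → k' ≤ k →
      ∃ c : Fin n × Fin q → ℕ, isABColouring n q σ 2 β c ∧ usesExactly n q k' c := by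
  obtain ⟨c, hc, huses⟩ := hcol
  intro k' h1 h2
  have hkpos : 0 < k := by omega
  have hne : ((Finset.univ : Finset (Fin n × Fin q)).image c).Nonempty := by
    rw [← Finset.card_pos, huses]; exact hkpos
  obtain ⟨x, hx⟩ := hne
  obtain ⟨v, -, -⟩ := Finset.mem_image.mp hx
  have hq : 0 < q := v.2.pos
  have hktot : k = ∑ i ∈ Finset.range n, Stmt14Aux.uC n q c i := by
    rw [← huses, Stmt14Aux.total_eq_sum_uC]
  have hkw : k ≤ ∑ i ∈ Finset.range n, max (Stmt14Aux.uC n q c i) 1 := by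
    rw [hktot]; exact Finset.sum_le_sum (fun i _ => le_max_left _ _)
  have hk'w : k' ≤ ∑ i ∈ Finset.range n, max (Stmt14Aux.uC n q c i) 1 := le_trans h2 hkw
  obtain ⟨d, hd⟩ := Nat.le.dest hk'w
  obtain ⟨t, ht, htsum⟩ := Stmt14Aux.exists_t (fun i => max (Stmt14Aux.uC n q c i) 1) n
    (fun i _ => le_max_right _ _) d k' (by omega) hd
  refine ⟨Stmt14Aux.col n q t, ?_, ?_⟩
  · exact Stmt14Aux.col_valid n r q β δ σ c hpart hδmem hδmin hδ hs2 hc t ht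
  · unfold usesExactly
    rw [Stmt14Aux.col_uses n q hq t (fun i hi => ⟨(ht i hi).1,
      le_trans (ht i hi).2 (max_le (Stmt14Aux.uC_le n q c i) hq)⟩), htsum]
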